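/- arXiv:2201.06414 — 2 statements merged into one kernel-verified Lean document; each statement's English description precedes it below -/
import Mathlib

section
/- Let θ and A be real 2×2 matrices with Aθ = θA, and let ξ ∈ ℝ². For s ∈ ℝ define φ_s : G(θ) → G(θ) by φ_s(t,v) = (t, exp(sA)v + Λ^θ_t Λ^A_s ξ). Then each φ_s is a bijective group homomorphism (automorphism) of G(θ), and φ_{s+s'} = φ_s ∘ φ_{s'} for all s, s' ∈ ℝ. -/
open Matrix

/-- The matrix exponential. -/
noncomputable def mexp (B : Matrix (Fin 2) (Fin 2) ℝ) : Matrix (Fin 2) (Fin 2) ℝ :=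
  NormedSpace.exp B

/-- `Λ^B_t = ∫₀^t exp(sB) ds`, taken entrywise. -/
noncomputable def Lam (B : Matrix (Fin 2) (Fin 2) ℝ) (t : ℝ) : Matrix (Fin 2) (Fin 2) ℝ :=
  Matrix.of fun i j => ∫ s in (0:ℝ)..t, mexp (s • B) i j

/-- The product of the group `G(θ)`:
`(t₁,v₁)·(t₂,v₂) = (t₁+t₂, v₁ + exp(t₁θ)v₂)`. -/
noncomputable def Gmul (θ : Matrix (Fin 2) (Fin 2) ℝ) (x y : ℝ × (Fin 2 → ℝ)) :
    ℝ × (Fin 2 → ℝ) :=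
  (x.1 + y.1, x.2 + mexp (x.1 • θ) *ᵥ y.2)

section Aux

attribute [local instance] Matrix.linftyOpNormedRing Matrix.linftyOpNormedAlgebra

lemma mexp_cont (B : Matrix (Fin 2) (Fin 2) ℝ) (i j : Fin 2) :
    Continuous fun s : ℝ => mexp (s • B) i j := by
  have h1 : Continuous fun s : ℝ => mexp (s • B) := by
    unfold mexp
    exact NormedSpace.exp_continuous.comp (continuous_id.smul continuous_const)
  exact (continuous_apply j).comp ((continuous_apply i).comp h1)

lemma mexp_intable (B : Matrix (Fin 2) (Fin 2) ℝ) (i j : Fin 2) (a b : ℝ) :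
    IntervalIntegrable (fun s : ℝ => mexp (s • B) i j) MeasureTheory.volume a b :=
  (mexp_cont B i j).intervalIntegrable a b

lemma mexp_zero : mexp 0 = 1 := NormedSpace.exp_zero

lemma mexp_add (B : Matrix (Fin 2) (Fin 2) ℝ) (t u : ℝ) :
    mexp ((t + u) • B) = mexp (t • B) * mexp (u • B) := by
  rw [add_smul]
  exact Matrix.exp_add_of_commute _ _ (((Commute.refl B).smul_left t).smul_right u)

lemma mexp_comm {B C : Matrix (Fin 2) (Fin 2) ℝ} (h : B * C = C * B) (t u : ℝ) :
    mexp (t • B) * mexp (u • C) = mexp (u • C) * mexp (t • B) := by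
  have hc : Commute (t • B) (u • C) := ((show Commute B C from h).smul_left t).smul_right u
  unfold mexp
  rw [← Matrix.exp_add_of_commute _ _ hc, ← Matrix.exp_add_of_commute _ _ hc.symm, add_comm]

lemma Lam_zero (B : Matrix (Fin 2) (Fin 2) ℝ) : Lam B 0 = 0 := by
  ext i j
  simp [Lam]

lemma Lam_add (B : Matrix (Fin 2) (Fin 2) ℝ) (t u : ℝ) :
    Lam B (t + u) = Lam B t + mexp (t • B) * Lam B u := by
  ext i j
  have h1 : (∫ s in (0:ℝ)..(t+u), mexp (s • B) i j)
      = (∫ s in (0:ℝ)..t, mexp (s • B) i j) + ∫ s in t..(t+u), mexp (s • B) i j :=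
    (intervalIntegral.integral_add_adjacent_intervals (mexp_intable B i j 0 t)
      (mexp_intable B i j t (t+u))).symm
  have h2 : (∫ s in t..(t+u), mexp (s • B) i j)
      = ∫ s in (0:ℝ)..u, mexp ((t + s) • B) i j := by
    rw [intervalIntegral.integral_comp_add_left (fun s => mexp (s • B) i j) t, add_zero]
  have h3 : (∫ s in (0:ℝ)..u, mexp ((t + s) • B) i j)
      = ∑ k, mexp (t • B) i k * ∫ s in (0:ℝ)..u, mexp (s • B) k j := by
    have e : ∀ s ∈ Set.uIcc (0:ℝ) u,
        mexp ((t + s) • B) i j = ∑ k, mexp (t • B) i k * mexp (s • B) k j := by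
      intro s _
      rw [mexp_add, Matrix.mul_apply]
    rw [intervalIntegral.integral_congr e, intervalIntegral.integral_finset_sum
        (fun k _ => (mexp_intable B k j 0 u).const_mul _)]
    simp [intervalIntegral.integral_const_mul]
  simp only [Lam, Matrix.add_apply, Matrix.of_apply, Matrix.mul_apply, h1, h2, h3]

lemma mexp_mul_Lam {B C : Matrix (Fin 2) (Fin 2) ℝ} (h : B * C = C * B) (s t : ℝ) :
    mexp (s • B) * Lam C t = Lam C t * mexp (s • B) := by
  ext i j
  have h1 : (mexp (s • B) * Lam C t) i j
      = ∫ u in (0:ℝ)..t, (mexp (s • B) * mexp (u • C)) i j := by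
    have e : ∀ u ∈ Set.uIcc (0:ℝ) t,
        (mexp (s • B) * mexp (u • C)) i j = ∑ k, mexp (s • B) i k * mexp (u • C) k j := by
      intro u _
      rw [Matrix.mul_apply]
    rw [intervalIntegral.integral_congr e, intervalIntegral.integral_finset_sum
        (fun k _ => (mexp_intable C k j 0 t).const_mul _)]
    simp [intervalIntegral.integral_const_mul, Matrix.mul_apply, Lam]
  have h2 : (Lam C t * mexp (s • B)) i j
      = ∫ u in (0:ℝ)..t, (mexp (u • C) * mexp (s • B)) i j := by
    have e : ∀ u ∈ Set.uIcc (0:ℝ) t,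
        (mexp (u • C) * mexp (s • B)) i j = ∑ k, mexp (u • C) i k * mexp (s • B) k j := by
      intro u _
      rw [Matrix.mul_apply]
    rw [intervalIntegral.integral_congr e, intervalIntegral.integral_finset_sum
        (fun k _ => (mexp_intable C i k 0 t).mul_const _)]
    simp [intervalIntegral.integral_mul_const, Matrix.mul_apply, Lam]
  rw [h1, h2]
  exact intervalIntegral.integral_congr fun u _ => by rw [mexp_comm h]

end Aux

theorem stmt6 (θ A : Matrix (Fin 2) (Fin 2) ℝ) (hcomm : A * θ = θ * A)
    (ξ : Fin 2 → ℝ)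
    (φ : ℝ → ℝ × (Fin 2 → ℝ) → ℝ × (Fin 2 → ℝ))
    (hφ : ∀ (s : ℝ) (p : ℝ × (Fin 2 → ℝ)),
      φ s p = (p.1, mexp (s • A) *ᵥ p.2 + Lam θ p.1 *ᵥ (Lam A s *ᵥ ξ))) :
    (∀ s : ℝ, Function.Bijective (φ s) ∧
        ∀ x y : ℝ × (Fin 2 → ℝ), φ s (Gmul θ x y) = Gmul θ (φ s x) (φ s y)) ∧
      ∀ s s' : ℝ, φ (s + s') = φ s ∘ φ s' := by
  have hid : φ 0 = id := by
    funext p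
    rw [hφ]
    simp [Lam_zero, zero_smul, mexp_zero]
  have hcomp : ∀ s s' : ℝ, φ (s + s') = φ s ∘ φ s' := by
    intro s s'
    funext p
    rw [Function.comp_apply, hφ, hφ, hφ]
    refine Prod.ext rfl ?_
    simp only
    rw [Lam_add, mexp_add]
    simp only [Matrix.add_mulVec, Matrix.mulVec_add, Matrix.mulVec_mulVec, Matrix.mul_add,
      ← Matrix.mul_assoc]
    rw [← mexp_mul_Lam hcomm s p.1]
    abel
  refine ⟨fun s => ⟨?_, ?_⟩, hcomp⟩
  · refine Function.bijective_iff_has_inverse.2 ⟨φ (-s), fun p => ?_, fun p => ?_⟩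
    · have := congrFun (hcomp (-s) s).symm p
      rw [neg_add_cancel, hid] at this
      simpa using this
    · have := congrFun (hcomp s (-s)).symm p
      rw [add_neg_cancel, hid] at this
      simpa using this
  · intro x y
    rw [hφ, hφ, hφ]
    refine Prod.ext rfl ?_
    simp only [Gmul]
    rw [Lam_add θ x.1 y.1]
    simp only [Matrix.add_mulVec, Matrix.mulVec_add, Matrix.mulVec_mulVec, Matrix.mul_add,
      Matrix.add_mul, ← Matrix.mul_assoc]
    rw [mexp_comm hcomm s x.1]
    abel
end

section
/- Let θ and A be real 2×2 matrices with Aθ = θA and A invertible, let ξ ∈ ℝ², and let n ∈ ℝ² be nonzero. Define H : ℝ × ℝ² → ℝ × ℝ² by H(t,v) = (t, A⁻¹(exp(tθ)v − Λ^θ_t ξ)). Then H is a homeomorphism of ℝ × ℝ² whose inverse is (t,v) ↦ (t, exp(−tθ)(Av + Λ^θ_t ξ)), and F(H(t,v)) = ⟨v, n⟩ for all (t,v) ∈ ℝ × ℝ². -/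
open Matrix

/-- `F(t,v) = ⟨exp(−tθ)(Av + Λ^θ_t ξ), n⟩`. -/
noncomputable def Fu (θ A : Matrix (Fin 2) (Fin 2) ℝ) (ξ n : Fin 2 → ℝ)
    (p : ℝ × (Fin 2 → ℝ)) : ℝ :=
  (mexp ((-p.1) • θ) *ᵥ (A *ᵥ p.2 + Lam θ p.1 *ᵥ ξ)) ⬝ᵥ n

lemma mexp_neg_mul (θ : Matrix (Fin 2) (Fin 2) ℝ) (t : ℝ) :
    mexp ((-t) • θ) * mexp (t • θ) = 1 := by
  have h := Matrix.exp_add_of_commute ((-t) • θ) (t • θ)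
    (((Commute.refl θ).smul_left (-t)).smul_right t)
  rw [neg_smul, neg_add_cancel, NormedSpace.exp_zero] at h
  simpa [mexp] using h.symm

lemma mexp_mul_neg (θ : Matrix (Fin 2) (Fin 2) ℝ) (t : ℝ) :
    mexp (t • θ) * mexp ((-t) • θ) = 1 := by
  have h := Matrix.exp_add_of_commute (t • θ) ((-t) • θ)
    (((Commute.refl θ).smul_left t).smul_right (-t))
  rw [neg_smul, add_neg_cancel, NormedSpace.exp_zero] at h
  simpa [mexp] using h.symm

lemma cont_mexp (θ : Matrix (Fin 2) (Fin 2) ℝ) :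
    Continuous fun t : ℝ => mexp (t • θ) := by
  letI : NormedRing (Matrix (Fin 2) (Fin 2) ℝ) := Matrix.linftyOpNormedRing
  letI : NormedAlgebra ℝ (Matrix (Fin 2) (Fin 2) ℝ) := Matrix.linftyOpNormedAlgebra
  letI : NormedAlgebra ℚ (Matrix (Fin 2) (Fin 2) ℝ) := NormedAlgebra.restrictScalars ℚ ℝ _
  exact (NormedSpace.exp_continuous (𝔸 := Matrix (Fin 2) (Fin 2) ℝ)).comp (continuous_id.smul continuous_const)

lemma cont_Lam (θ : Matrix (Fin 2) (Fin 2) ℝ) : Continuous (Lam θ) := by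
  refine continuous_pi fun i => continuous_pi fun j => ?_
  have h : Continuous fun s : ℝ => mexp (s • θ) i j :=
    ((continuous_apply j).comp ((continuous_apply i).comp (cont_mexp θ)))
  exact intervalIntegral.continuous_primitive
    (fun a b => h.intervalIntegrable a b) 0

lemma cont_mulVec {X : Type*} [TopologicalSpace X] {f : X → Matrix (Fin 2) (Fin 2) ℝ}
    {g : X → Fin 2 → ℝ} (hf : Continuous f) (hg : Continuous g) :
    Continuous fun x => f x *ᵥ g x := by
  refine continuous_pi fun i => ?_
  simp only [Matrix.mulVec, dotProduct]
  exact continuous_finset_sum _ fun j _ =>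
    ((continuous_apply j).comp ((continuous_apply i).comp hf)).mul
      ((continuous_apply j).comp hg)

lemma key (θ A : Matrix (Fin 2) (Fin 2) ℝ) (hA : IsUnit A) (ξ : Fin 2 → ℝ)
    (t : ℝ) (v : Fin 2 → ℝ) :
    mexp ((-t) • θ) *ᵥ (A *ᵥ (A⁻¹ *ᵥ (mexp (t • θ) *ᵥ v - Lam θ t *ᵥ ξ)) + Lam θ t *ᵥ ξ)
      = v := by
  have hdet : IsUnit A.det := (Matrix.isUnit_iff_isUnit_det A).mp hA
  rw [Matrix.mulVec_mulVec, Matrix.mul_nonsing_inv A hdet, Matrix.one_mulVec,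
    sub_add_cancel, Matrix.mulVec_mulVec, mexp_neg_mul, Matrix.one_mulVec]

theorem stmt14 (θ A : Matrix (Fin 2) (Fin 2) ℝ) (hcomm : A * θ = θ * A) (hA : IsUnit A)
    (ξ n : Fin 2 → ℝ) (hn : n ≠ 0)
    (H Hinv : ℝ × (Fin 2 → ℝ) → ℝ × (Fin 2 → ℝ))
    (hH : ∀ p : ℝ × (Fin 2 → ℝ),
      H p = (p.1, A⁻¹ *ᵥ (mexp (p.1 • θ) *ᵥ p.2 - Lam θ p.1 *ᵥ ξ)))
    (hHinv : ∀ p : ℝ × (Fin 2 → ℝ),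
      Hinv p = (p.1, mexp ((-p.1) • θ) *ᵥ (A *ᵥ p.2 + Lam θ p.1 *ᵥ ξ))) :
    Continuous H ∧ Continuous Hinv ∧
      Function.LeftInverse Hinv H ∧ Function.RightInverse Hinv H ∧
      ∀ p : ℝ × (Fin 2 → ℝ), Fu θ A ξ n (H p) = p.2 ⬝ᵥ n := by
  have hdet : IsUnit A.det := (Matrix.isUnit_iff_isUnit_det A).mp hA
  have hcontH : Continuous H := by
    have : Continuous fun p : ℝ × (Fin 2 → ℝ) =>
        (p.1, A⁻¹ *ᵥ (mexp (p.1 • θ) *ᵥ p.2 - Lam θ p.1 *ᵥ ξ)) := by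
      refine continuous_fst.prodMk (cont_mulVec continuous_const ?_)
      exact (cont_mulVec ((cont_mexp θ).comp continuous_fst) continuous_snd).sub
        (cont_mulVec ((cont_Lam θ).comp continuous_fst) continuous_const)
    exact (funext hH ▸ this : Continuous H)
  have hcontHinv : Continuous Hinv := by
    have : Continuous fun p : ℝ × (Fin 2 → ℝ) =>
        (p.1, mexp ((-p.1) • θ) *ᵥ (A *ᵥ p.2 + Lam θ p.1 *ᵥ ξ)) := by
      refine continuous_fst.prodMk (cont_mulVec ((cont_mexp θ).comp continuous_fst.neg) ?_)
      exact (cont_mulVec continuous_const continuous_snd).add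
        (cont_mulVec ((cont_Lam θ).comp continuous_fst) continuous_const)
    exact (funext hHinv ▸ this : Continuous Hinv)
  have hleft : Function.LeftInverse Hinv H := by
    intro p
    rw [hH, hHinv]
    simp only
    rw [key θ A hA ξ p.1 p.2]
  have hright : Function.RightInverse Hinv H := by
    intro p
    rw [hHinv, hH]
    simp only
    rw [Matrix.mulVec_mulVec, mexp_mul_neg, Matrix.one_mulVec, add_sub_cancel_right,
      Matrix.mulVec_mulVec, Matrix.nonsing_inv_mul A hdet, Matrix.one_mulVec]
  refine ⟨hcontH, hcontHinv, hleft, hright, fun p => ?_⟩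
  rw [hH, Fu]
  simp only
  rw [key θ A hA ξ p.1 p.2]
end
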